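/- arXiv:2401.16109 — 7 statements merged into one kernel-verified Lean document; each statement's English description precedes it below -/
import Mathlib

section
/- Assume the interface of f and g is nonempty. Then there exists a runnable (i.e. nonempty-behaviour) composition of f and g if and only if there exists a compatible pair (x,y) ∈ Beh(f) × Beh(g). -/
/-- A system: a set of behaviours `B` together with a map into component snapshots. -/
structure System (Comp : Type) (Beh : Comp → Type) where
  B : Type
  C : Set Comp
  f : B → (c : Comp) → c ∈ C → Beh c

variable {Comp : Type} {Beh : Comp → Type}

/-- `σ` is an implementation of `g` in `f`: `Comp(g) ⊆ Comp(f)` and `f_{Comp(g)} = g ∘ σ`. -/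
def Implements (f g : System Comp Beh) (σ : f.B → g.B) : Prop :=
  g.C ⊆ f.C ∧ ∀ (b : f.B) (c : Comp) (hg : c ∈ g.C) (hf : c ∈ f.C),
    f.f b c hf = g.f (σ b) c hg
/-- `(x,y)` is compatible: the interface is empty or `f_I(x) = g_I(y)`. -/
def Compatible (f g : System Comp Beh) (x : f.B) (y : g.B) : Prop :=
  f.C ∩ g.C = ∅ ∨
    ∀ (c : Comp) (hf : c ∈ f.C) (hg : c ∈ g.C), f.f x c hf = g.f y c hg

open Classical in
/-- The canonical free composition `f ⊗ g`. -/
noncomputable def tensor (f g : System Comp Beh) : System Comp Beh where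
  B := {p : f.B × g.B // Compatible f g p.1 p.2}
  C := f.C ∪ g.C
  f := fun p c hc =>
    if hf : c ∈ f.C then f.f p.val.1 c hf
    else g.f p.val.2 c (Or.resolve_left hc hf)
/-- `h` is a composition of `f` and `g`. -/
def IsComposition (h f g : System Comp Beh) : Prop :=
  h.C = f.C ∪ g.C ∧ (∃ σ : h.B → f.B, Implements h f σ) ∧
    (∃ ρ : h.B → g.B, Implements h g ρ)

/-- if the interface is nonempty, a runnable composition of `f`
and `g` exists iff a compatible pair exists. -/
theorem runnable_composition_iff_compatible (f g : System Comp Beh)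
    (hI : (f.C ∩ g.C).Nonempty) :
    (∃ h : System Comp Beh, IsComposition h f g ∧ Nonempty h.B) ↔
      ∃ (x : f.B) (y : g.B), Compatible f g x y := by
  constructor
  · rintro ⟨h, ⟨hC, ⟨σ, hσC, hσ⟩, ⟨ρ, hρC, hρ⟩⟩, ⟨b⟩⟩
    refine ⟨σ b, ρ b, Or.inr fun c hf hg => ?_⟩
    have hfh : c ∈ h.C := hC ▸ Or.inl hf
    rw [← hσ b c hf hfh, ← hρ b c hg hfh]
  · rintro ⟨x, y, hxy⟩
    refine ⟨tensor f g, ⟨rfl, ⟨fun p => p.val.1, Set.subset_union_left, ?_⟩,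
      ⟨fun p => p.val.2, Set.subset_union_right, ?_⟩⟩, ⟨⟨(x, y), hxy⟩⟩⟩
    · intro b c hg hf
      simp only [tensor, dif_pos hg]
    · intro b c hg hf
      by_cases hcf : c ∈ f.C
      · simp only [tensor, dif_pos hcf]
        rcases b.prop with h0 | h0
        · exact absurd (Set.eq_empty_iff_forall_notMem.mp h0 c ⟨hcf, hg⟩) not_false
        · exact h0 c hcf hg
      · simp only [tensor, dif_neg hcf]
end

section
/- Suppose g is runnable, the interface I := Int(f,g) equals the component set of a system e, f implements e via a surjective map ρ (i.e., e is an input of f), and g implements e via some map σ. Then there exists a runnable composition of f and g. -/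
variable {Comp : Type} {Beh : Comp → Type}

/-- if `g` is runnable, the interface of `f` and `g` is the
component set of a system `e`, `f` implements `e` via a surjective map
(`e` is an input of `f`) and `g` implements `e`, then there is a runnable
composition of `f` and `g`. -/
theorem runnable_composition_of_input (f g e : System Comp Beh)
    (hg : Nonempty g.B)
    (hIe : e.C = f.C ∩ g.C)
    (ρ : f.B → e.B) (hρ : Implements f e ρ) (hsurj : Function.Surjective ρ)
    (σ : g.B → e.B) (hσ : Implements g e σ) :
    ∃ h : System Comp Beh, IsComposition h f g ∧ Nonempty h.B := by
  obtain ⟨y⟩ := hg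
  obtain ⟨x, hx⟩ := hsurj (σ y)
  have hcompat : Compatible f g x y := by
    right
    intro c hf hgc
    have he : c ∈ e.C := by rw [hIe]; exact ⟨hf, hgc⟩
    rw [hρ.2 x c he hf, hσ.2 y c he hgc, hx]
  refine ⟨tensor f g, ⟨rfl, ⟨fun p => p.val.1, ?_, ?_⟩,
    ⟨fun p => p.val.2, ?_, ?_⟩⟩, ⟨⟨(x, y), hcompat⟩⟩⟩
  · exact fun c hc => Or.inl hc
  · intro b c hgc hf
    simp only [tensor, dif_pos hgc]
  · exact fun c hc => Or.inr hc
  · intro b c hgc hf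
    by_cases hfc : c ∈ f.C
    · simp only [tensor, dif_pos hfc]
      rcases b.property with h0 | h0
      · exact absurd (Set.eq_empty_iff_forall_notMem.mp h0 c ⟨hfc, hgc⟩) not_false
      · exact h0 c hfc hgc
    · simp only [tensor, dif_neg hfc]
end

section
/- Generalized CAP theorem: Let f implement g₁ via σ₁ and g₂ via σ₂, let C ⊆ Beh(f), and suppose R, S ⊆ Beh(f)² are C-entangled over (σ₁,σ₂). Then every runnable implementation σ : Beh(h) → Beh(f) of f violates at least one of: C-consistency, (strong R-availability and weak S-availability), (σ₁,σ₂)-partition-tolerance. -/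
variable {Comp : Type} {Beh : Comp → Type}

/-- `C`-consistency guarantee: only behaviours in `C` are realized. -/
def consistencyG {F : Type} (C : Set F) : Set (Set F) := {X | X ⊆ C}

/-- Strong `R`-availability guarantee. -/
def strongAvail {F : Type} (R : F → F → Prop) : Set (Set F) :=
  {X | ∀ x ∈ X, ∀ y, R x y → y ∈ X}

/-- Weak `R`-availability guarantee. -/
def weakAvail {F : Type} (R : F → F → Prop) : Set (Set F) :=
  {X | ∀ x ∈ X, (∃ y, R x y) → ∃ y ∈ X, R x y}

/-- `(σ₁,σ₂)`-partition-tolerance guarantee. -/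
def partTol {F G1 G2 : Type} (σ1 : F → G1) (σ2 : F → G2) : Set (Set F) :=
  {X | ∀ x1 ∈ X, ∀ x2 ∈ X, ∃ x ∈ X, σ1 x = σ1 x1 ∧ σ2 x = σ2 x2}

/-- `R` and `S` are `C`-entangled over `(σ₁,σ₂)`. -/
def Entangled {F G1 G2 : Type} (σ1 : F → G1) (σ2 : F → G2) (C : Set F)
    (R S : F → F → Prop) : Prop :=
  ∀ w, ∃ x, R w x ∧ (∃ v, S x v) ∧ ∀ v, S x v → ∀ y z,
    σ1 y = σ1 v → σ1 z = σ1 v → σ2 y = σ2 w → σ2 z = σ2 x → (y ∉ C ∨ z ∉ C)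

/-- generalized CAP theorem: if `R, S` are `C`-entangled over
`(σ₁,σ₂)`, then every runnable implementation of `f` violates `C`-consistency,
or (strong `R`- and weak `S`-availability), or `(σ₁,σ₂)`-partition-tolerance. -/
theorem generalized_CAP (f g1 g2 h : System Comp Beh)
    (σ1 : f.B → g1.B) (σ2 : f.B → g2.B)
    (h1 : Implements f g1 σ1) (h2 : Implements f g2 σ2)
    (C : Set f.B) (R S : f.B → f.B → Prop)
    (hent : Entangled σ1 σ2 C R S)
    (σ : h.B → f.B) (himp : Implements h f σ) (hrun : Nonempty h.B) :
    ¬ (Set.range σ ∈ consistencyG C ∧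
       (Set.range σ ∈ strongAvail R ∧ Set.range σ ∈ weakAvail S) ∧
       Set.range σ ∈ partTol σ1 σ2) := by
  rintro ⟨hcons, ⟨hsa, hwa⟩, hpt⟩
  obtain ⟨b⟩ := hrun
  set w := σ b with hw
  have hwX : w ∈ Set.range σ := ⟨b, rfl⟩
  obtain ⟨x, hRwx, ⟨v0, hSv0⟩, hprop⟩ := hent w
  have hxX : x ∈ Set.range σ := hsa w hwX x hRwx
  obtain ⟨v, hvX, hSxv⟩ := hwa x hxX ⟨v0, hSv0⟩
  obtain ⟨y, hyX, hy1, hy2⟩ := hpt v hvX w hwX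
  obtain ⟨z, hzX, hz1, hz2⟩ := hpt v hvX x hxX
  rcases hprop v hSxv y z hy1 hz1 hy2 hz2 with hy | hz
  · exact hy (hcons hyX)
  · exact hz (hcons hzX)
end

section
/- Local reasoning I: Let g ←σ f →π h be implementations with I := Comp(g) ∩ Comp(h) nonempty and I ⊆ Comp(g), I ⊆ Comp(h). For α in the elementary logic over I and β in the elementary logic over Comp(h): if g,𝒱 ⊨ α and h,𝒱 ⊨ α → β, then f,𝒱 ⊨ β. -/
variable {Comp : Type} {Beh : Comp → Type}

/-- Formulas of the modal logic `ℒ(C)^□` (atoms, ∧, ¬, □). -/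
inductive Fml (Comp : Type) (Var : Comp → Type) : Type
  | atom (c : Comp) (p : Var c)
  | and (φ ψ : Fml Comp Var)
  | not (φ : Fml Comp Var)
  | box (φ : Fml Comp Var)

variable {Var : Comp → Type}

/-- Satisfaction `f, 𝒱, x ⊨ φ`. -/
def Sat (V : (c : Comp) → Var c → Set (Beh c)) (f : System Comp Beh) :
    f.B → Fml Comp Var → Prop
  | x, .atom c p => ∃ hc : c ∈ f.C, f.f x c hc ∈ V c p
  | x, .and φ ψ => Sat V f x φ ∧ Sat V f x ψ
  | x, .not φ => ¬ Sat V f x φ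
  | _, .box φ => ∀ y : f.B, Sat V f y φ

/-- The formula only uses atoms over the components in `C`. -/
def InLogic (C : Set Comp) : Fml Comp Var → Prop
  | .atom c _ => c ∈ C
  | .and φ ψ => InLogic C φ ∧ InLogic C ψ
  | .not φ => InLogic C φ
  | .box φ => InLogic C φ

/-- Formulas of the elementary logic: no `□`. -/
def Elementary : Fml Comp Var → Prop
  | .atom _ _ => True
  | .and φ ψ => Elementary φ ∧ Elementary ψ
  | .not φ => Elementary φ
  | .box _ => False

/-- Classical implication `φ → ψ := ¬(φ ∧ ¬ψ)`. -/
def Fml.imp (φ ψ : Fml Comp Var) : Fml Comp Var := .not (.and φ (.not ψ))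

/-- `f, 𝒱 ⊨ φ`: satisfaction at all behaviours. -/
def SatAll (V : (c : Comp) → Var c → Set (Beh c)) (f : System Comp Beh)
    (φ : Fml Comp Var) : Prop :=
  ∀ x : f.B, Sat V f x φ

theorem sat_transfer {Var : Comp → Type} (V : (c : Comp) → Var c → Set (Beh c))
    (f g : System Comp Beh) (σ : f.B → g.B) (hσ : Implements f g σ)
    (φ : Fml Comp Var) (hel : Elementary φ) (hlog : InLogic g.C φ) (x : f.B) :
    Sat V f x φ ↔ Sat V g (σ x) φ := by
  induction φ with
  | atom c p =>
    simp only [Sat]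
    constructor
    · rintro ⟨hf, hv⟩
      exact ⟨hlog, by rw [← hσ.2 x c hlog hf]; exact hv⟩
    · rintro ⟨hg, hv⟩
      exact ⟨hσ.1 hlog, by rw [hσ.2 x c hg (hσ.1 hlog)]; exact hv⟩
  | and φ ψ ihφ ihψ =>
    exact and_congr (ihφ hel.1 hlog.1) (ihψ hel.2 hlog.2)
  | not φ ih => exact not_congr (ih hel hlog)
  | box φ ih => exact absurd hel id

theorem inLogic_mono {Var : Comp → Type} {C D : Set Comp} (hCD : C ⊆ D) :
    ∀ φ : Fml Comp Var, InLogic C φ → InLogic D φ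
  | .atom c p, h => hCD h
  | .and φ ψ, h => ⟨inLogic_mono hCD φ h.1, inLogic_mono hCD ψ h.2⟩
  | .not φ, h => inLogic_mono hCD φ h
  | .box φ, h => inLogic_mono hCD φ h

/-- Local reasoning I: if `f` implements `g` and `h` with
nonempty interface `I = Comp(g) ∩ Comp(h)`, `α ∈ ℒ(I)`, `β ∈ ℒ(Comp(h))`,
`g,𝒱 ⊨ α` and `h,𝒱 ⊨ α → β`, then `f,𝒱 ⊨ β`. -/
theorem local_reasoning_I (V : (c : Comp) → Var c → Set (Beh c))
    (f g h : System Comp Beh) (σ : f.B → g.B) (π : f.B → h.B)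
    (hσ : Implements f g σ) (hπ : Implements f h π)
    (hI : (g.C ∩ h.C).Nonempty)
    (α β : Fml Comp Var)
    (hαel : Elementary α) (hαlog : InLogic (g.C ∩ h.C) α)
    (hβel : Elementary β) (hβlog : InLogic h.C β)
    (hgα : SatAll V g α) (hhαβ : SatAll V h (Fml.imp α β)) :
    SatAll V f β := by
  intro x
  have hαg : InLogic g.C α := inLogic_mono Set.inter_subset_left α hαlog
  have hαh : InLogic h.C α := inLogic_mono Set.inter_subset_right α hαlog
  have h1 : Sat V f x α := (sat_transfer V f g σ hσ α hαel hαg x).2 (hgα (σ x))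
  have h2 : Sat V h (π x) α := (sat_transfer V f h π hπ α hαel hαh x).1 h1
  have h3 := hhαβ (π x)
  simp only [Fml.imp, Sat, not_and, not_not] at h3
  exact (sat_transfer V f h π hπ β hβel hβlog x).2 (h3 h2)
end

section
/- Frame rule for disjoint composition: if Comp(g) ∩ Comp(h) = ∅, then for every β ∈ ℒ(Comp(h))^□ and every (x,y) ∈ Beh(g) × Beh(h) = Beh(g⊗h): g⊗h,𝒱,(x,y) ⊨ β if and only if h,𝒱,y ⊨ β. In particular, h,𝒱 ⊨ β implies g⊗h,𝒱 ⊨ β. -/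
variable {Comp : Type} {Beh : Comp → Type}

variable {Var : Comp → Type}

/-- frame rule for disjoint composition: if
`Comp(g) ∩ Comp(h) = ∅` and `β ∈ ℒ(Comp(h))^□`, then for every behaviour
`(x,y)` of `g ⊗ h`, `g⊗h,𝒱,(x,y) ⊨ β` iff `h,𝒱,y ⊨ β`; in particular
`h,𝒱 ⊨ β` implies `g⊗h,𝒱 ⊨ β`. -/
theorem frame_rule (V : (c : Comp) → Var c → Set (Beh c))
    (g h : System Comp Beh) (hdisj : g.C ∩ h.C = ∅) (hg : Nonempty g.B)
    (β : Fml Comp Var) (hβlog : InLogic h.C β) :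
    (∀ p : (tensor g h).B, Sat V (tensor g h) p β ↔ Sat V h p.val.2 β) ∧
    (SatAll V h β → SatAll V (tensor g h) β) := by
  have main : ∀ β : Fml Comp Var, InLogic h.C β →
      ∀ p : (tensor g h).B, Sat V (tensor g h) p β ↔ Sat V h p.val.2 β := by
    intro β
    induction β with
    | atom c q =>
      intro hc p
      have hng : c ∉ g.C := fun hcg =>
        Set.eq_empty_iff_forall_notMem.mp hdisj c ⟨hcg, hc⟩
      constructor
      · rintro ⟨h1, h2⟩
        refine ⟨hc, ?_⟩
        simpa [tensor, hng] using h2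
      · rintro ⟨h1, h2⟩
        exact ⟨Or.inr hc, by simpa [tensor, hng] using h2⟩
    | and φ ψ ihφ ihψ =>
      rintro ⟨h1, h2⟩ p
      exact and_congr (ihφ h1 p) (ihψ h2 p)
    | not φ ihφ =>
      intro h1 p
      exact not_congr (ihφ h1 p)
    | box φ ihφ =>
      intro h1 p
      constructor
      · intro hall y
        obtain ⟨x⟩ := hg
        have hcomp : Compatible g h x y := Or.inl hdisj
        exact (ihφ h1 ⟨(x, y), hcomp⟩).mp (hall ⟨(x, y), hcomp⟩)
      · intro hall q
        exact (ihφ h1 q).mpr (hall q.val.2)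
  exact ⟨main β hβlog, fun hs p => (main β hβlog p).mpr (hs p.val.2)⟩
end

section
/- Hennessy–Milner theorem, modal part: let f, g be systems with the same component set C and Var(C) finite. For x ∈ Beh(f), y ∈ Beh(g), the following are equivalent: (1) for all φ ∈ ℒ(C)^□, f,x ⊨ φ iff g,y ⊨ φ; (2) tp(x) = tp(y) and tps(f) = tps(g), where tp(x) = {p ∈ Var(C) : f,x ⊨ p} and tps(f) = {tp(x') : x' ∈ Beh(f)}. -/
variable {Comp : Type} {Beh : Comp → Type}

variable {Var : Comp → Type}

/-- The type of `x`: the set of atomic formulas satisfied at `x`. -/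
def tp (V : (c : Comp) → Var c → Set (Beh c)) (f : System Comp Beh) (x : f.B) :
    Set ((c : Comp) × Var c) :=
  {a | Sat V f x (Fml.atom a.1 a.2)}

/-- The set of types realized in `f`. -/
def tps (V : (c : Comp) → Var c → Set (Beh c)) (f : System Comp Beh) :
    Set (Set ((c : Comp) × Var c)) :=
  {D | ∃ x : f.B, tp V f x = D}

section Aux

variable (V : (c : Comp) → Var c → Set (Beh c))

lemma mem_tp_iff {f : System Comp Beh} {z : f.B} {a : (c : Comp) × Var c} :
    a ∈ tp V f z ↔ Sat V f z (Fml.atom a.1 a.2) := Iff.rfl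

lemma tp_subset {C : Set Comp} {f : System Comp Beh} (hf : f.C = C) (z : f.B) :
    tp V f z ⊆ {a | a.1 ∈ C} := by
  rintro a ⟨hc, -⟩
  exact hf ▸ hc

/-- Core of (2)⇒(1): same tps and same tp imply same satisfaction. -/
lemma sat_of_tp_eq :
    ∀ (φ : Fml Comp Var) (f g : System Comp Beh) (z : f.B) (w : g.B),
      tps V f = tps V g → tp V f z = tp V g w → Sat V f z φ → Sat V g w φ := by
  intro φ
  induction φ with
  | atom c p =>
    intro f g z w _ htp hs
    have : (⟨c, p⟩ : (c : Comp) × Var c) ∈ tp V f z := hs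
    rw [htp] at this
    exact this
  | and φ ψ ihφ ihψ =>
    intro f g z w htps htp hs
    exact ⟨ihφ f g z w htps htp hs.1, ihψ f g z w htps htp hs.2⟩
  | not φ ih =>
    intro f g z w htps htp hs hs'
    exact hs (ih g f w z htps.symm htp.symm hs')
  | box φ ih =>
    intro f g z w htps _ hs w'
    have : tp V g w' ∈ tps V f := by rw [htps]; exact ⟨w', rfl⟩
    obtain ⟨z', hz'⟩ := this
    exact ih f g z' w' htps hz' (hs z')

open Classical in
/-- Literal for atom `a` relative to type `D`. -/
noncomputable def lit (D : Set ((c : Comp) × Var c)) (a : (c : Comp) × Var c) :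
    Fml Comp Var :=
  if a ∈ D then .atom a.1 a.2 else .not (.atom a.1 a.2)

lemma sat_lit (f : System Comp Beh) (z : f.B) (D : Set ((c : Comp) × Var c))
    (a : (c : Comp) × Var c) :
    Sat V f z (lit D a) ↔ (a ∈ D ↔ Sat V f z (Fml.atom a.1 a.2)) := by
  unfold lit
  split <;> rename_i h <;> simp [Sat, h]

lemma inLogic_lit (C : Set Comp) (D : Set ((c : Comp) × Var c))
    (a : (c : Comp) × Var c) (ha : a.1 ∈ C) : InLogic C (lit (Var := Var) D a) := by
  unfold lit; split <;> exact ha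

/-- A tautology in the logic. -/
def tautAt (a0 : (c : Comp) × Var c) : Fml Comp Var :=
  .not (.and (.atom a0.1 a0.2) (.not (.atom a0.1 a0.2)))

lemma sat_tautAt (f : System Comp Beh) (z : f.B) (a0 : (c : Comp) × Var c) :
    Sat V f z (tautAt a0) := by
  simp [tautAt, Sat]

/-- Characteristic formula of `D` over atom list `l`. -/
noncomputable def charFml (D : Set ((c : Comp) × Var c))
    (base : Fml Comp Var) (l : List ((c : Comp) × Var c)) : Fml Comp Var :=
  l.foldr (fun a ψ => .and (lit D a) ψ) base

lemma sat_charFml (f : System Comp Beh) (z : f.B) (D : Set ((c : Comp) × Var c))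
    (base : Fml Comp Var) (l : List ((c : Comp) × Var c)) :
    Sat V f z (charFml D base l) ↔
      (∀ a ∈ l, Sat V f z (lit D a)) ∧ Sat V f z base := by
  induction l with
  | nil => simp [charFml]
  | cons a l ih =>
    simp only [charFml, List.foldr] at *
    show Sat V f z (lit D a) ∧ _ ↔ _
    rw [ih]
    simp; tauto

lemma inLogic_charFml (C : Set Comp) (D : Set ((c : Comp) × Var c))
    (base : Fml Comp Var) (hb : InLogic C base) (l : List ((c : Comp) × Var c))
    (hl : ∀ a ∈ l, a.1 ∈ C) : InLogic C (charFml (Var := Var) D base l) := by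
  induction l with
  | nil => exact hb
  | cons a l ih =>
    exact ⟨inLogic_lit C D a (hl a (by simp)), ih fun a ha => hl a (by simp [ha])⟩

lemma sat_charFml_iff (C : Set Comp)
    (hfin : {a : (c : Comp) × Var c | a.1 ∈ C}.Finite)
    (e : System Comp Beh) (he : e.C = C) (D : Set ((c : Comp) × Var c))
    (hD : D ⊆ {a | a.1 ∈ C}) (a0 : (c : Comp) × Var c) (u : e.B) :
    Sat V e u (charFml D (tautAt a0) hfin.toFinset.toList) ↔ tp V e u = D := by
  rw [sat_charFml]
  constructor
  · rintro ⟨h, -⟩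
    ext a
    by_cases hc : a.1 ∈ C
    · have := (sat_lit V e u D a).mp
        (h a (by rw [Finset.mem_toList, Set.Finite.mem_toFinset]; exact hc))
      rw [mem_tp_iff]
      exact (this).symm
    · constructor
      · intro hmem; exact absurd (tp_subset V he u hmem) hc
      · intro hmem; exact absurd (hD hmem) hc
  · intro htp
    refine ⟨fun a _ => ?_, sat_tautAt V e u a0⟩
    rw [sat_lit, ← htp]
    exact Iff.rfl

lemma tps_sub (C : Set Comp) (f g : System Comp Beh) (hf : f.C = C) (hg : g.C = C)
    (hfin : {a : (c : Comp) × Var c | a.1 ∈ C}.Finite) (x : f.B) (y : g.B)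
    (h : ∀ φ : Fml Comp Var, InLogic C φ → Sat V f x φ → Sat V g y φ) :
    tps V f ⊆ tps V g := by
  rintro D ⟨z, rfl⟩
  by_cases hne : ∃ a0 : (c : Comp) × Var c, a0.1 ∈ C
  · obtain ⟨a0, ha0⟩ := hne
    set φD := charFml (tp V f z) (tautAt a0) hfin.toFinset.toList with hφD
    have hin : InLogic C (Fml.not (Fml.box (Fml.not φD))) := by
      refine inLogic_charFml C _ _ ?_ _ ?_
      · exact ⟨ha0, ha0⟩
      · intro a ha
        rw [Finset.mem_toList, Set.Finite.mem_toFinset] at ha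
        exact ha
    have hsatf : Sat V f x (Fml.not (Fml.box (Fml.not φD))) := by
      intro hall
      exact hall z ((sat_charFml_iff V C hfin f hf _ (tp_subset V hf z) a0 z).mpr rfl)
    have hsatg := h _ hin hsatf
    simp only [Sat, not_forall, not_not] at hsatg
    obtain ⟨w, hw⟩ := hsatg
    exact ⟨w, (sat_charFml_iff V C hfin g hg _ (tp_subset V hf z) a0 w).mp hw⟩
  · push_neg at hne
    refine ⟨y, ?_⟩
    have h1 : tp V g y = ∅ := by
      apply Set.eq_empty_of_forall_notMem
      intro a ha; exact hne a (tp_subset V hg y ha)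
    have h2 : tp V f z = ∅ := by
      apply Set.eq_empty_of_forall_notMem
      intro a ha; exact hne a (tp_subset V hf z ha)
    rw [h1, h2]

end Aux

/-- Hennessy–Milner, modal part: for systems with the same
component set `C` and `Var(C)` finite, two behaviours satisfy the same
`ℒ(C)^□`-formulas iff they have the same type and the two systems realize the
same sets of types. -/
theorem hennessy_milner_modal (V : (c : Comp) → Var c → Set (Beh c))
    (C : Set Comp) (f g : System Comp Beh) (hf : f.C = C) (hg : g.C = C)
    (hfin : {a : (c : Comp) × Var c | a.1 ∈ C}.Finite)
    (x : f.B) (y : g.B) :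
    (∀ φ : Fml Comp Var, InLogic C φ → (Sat V f x φ ↔ Sat V g y φ)) ↔
      (tp V f x = tp V g y ∧ tps V f = tps V g) := by
  constructor
  · intro h
    constructor
    · ext a
      by_cases hc : a.1 ∈ C
      · exact h (Fml.atom a.1 a.2) hc
      · constructor
        · intro hmem; exact absurd (tp_subset V hf x hmem) hc
        · intro hmem; exact absurd (tp_subset V hg y hmem) hc
    · apply Set.Subset.antisymm
      · exact tps_sub V C f g hf hg hfin x y (fun φ hφ => (h φ hφ).mp)
      · exact tps_sub V C g f hg hf hfin y x (fun φ hφ => (h φ hφ).mpr)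
  · rintro ⟨htp, htps⟩ φ _
    exact ⟨sat_of_tp_eq V φ f g x y htps htp,
      sat_of_tp_eq V φ g f y x htps.symm htp.symm⟩
end

section
/- CAP instance via entanglement: in the two-user replicated database model, the relations R (appending a write by user 2 with a fresh value) and S (appending a read request by user 1, a finite string of user-2 actions, and a read response to user 1) are C-entangled over (σ₁, σ₂), where C is the set of consistent sequences and σ_i projects a well-formed sequence onto the actions of user i. -/
/-- Timestamped actions of the two-user replicated database: read requests,
read responses, and writes (user `0` is "user 1", user `1` is "user 2"). -/
inductive Act : Type
  | rdReq (u : Fin 2) (t : ℚ)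
  | rd (u : Fin 2) (t : ℚ) (s : String)
  | wr (u : Fin 2) (t : ℚ) (s : String)
  deriving DecidableEq

/-- The timestamp of an action. -/
def Act.time : Act → ℚ
  | .rdReq _ t => t
  | .rd _ t _ => t
  | .wr _ t _ => t

/-- The user initiating an action. -/
def Act.user : Act → Fin 2
  | .rdReq u _ => u
  | .rd u _ _ => u
  | .wr u _ _ => u

/-- Well-formed sequences: timestamps are nonnegative and strictly ascending. -/
def WF (l : List Act) : Prop :=
  l.Pairwise (fun a b => a.time < b.time) ∧ ∀ a ∈ l, 0 ≤ a.time

/-- The set `𝒮` of well-formed sequences. -/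
def WSeq : Type := {l : List Act // WF l}

/-- Projection onto the actions of user `i`. -/
def projList (i : Fin 2) (l : List Act) : List Act :=
  l.filter (fun a => decide (a.user = i))

theorem WF.proj {l : List Act} (h : WF l) (i : Fin 2) : WF (projList i l) :=
  ⟨h.1.sublist List.filter_sublist,
   fun a ha => h.2 a (List.mem_of_mem_filter ha)⟩

/-- `σᵢ : 𝒮 → 𝒮`, deleting all actions of the other user. -/
def σp (i : Fin 2) (w : WSeq) : WSeq := ⟨projList i w.val, w.prop.proj i⟩

/-- The current value at time `t`: the value of the latest write with
timestamp `≤ t` (the last such in list order), or `s0` if there is none. -/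
def lastWriteVal (s0 : String) (t : ℚ) : List Act → String
  | [] => s0
  | Act.wr _ t' s :: rest =>
      if t' ≤ t then lastWriteVal s t rest else lastWriteVal s0 t rest
  | _ :: rest => lastWriteVal s0 t rest

/-- Consistency: for every pair `t:rd^u?` and `t':rd^u(s)` with `t < t'` and no
read by user `u` strictly in between, `s` is the current value at some
timestamp in `[t, t']`. -/
def Consistent (s0 : String) (l : List Act) : Prop :=
  ∀ (i j : ℕ) (hi : i < l.length) (hj : j < l.length), i < j →
    ∀ (u : Fin 2) (t t' : ℚ) (s : String),
      l[i] = Act.rdReq u t → l[j] = Act.rd u t' s →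
      (∀ (k : ℕ) (hk : k < l.length), i < k → k < j →
        ∀ (t'' : ℚ) (s'' : String), l[k] ≠ Act.rd u t'' s'') →
      t < t' →
      ∃ τ : ℚ, t ≤ τ ∧ τ ≤ t' ∧ s = lastWriteVal s0 τ l

/-- `R` relates `w` to `w` appended with a write `t:wr²(s)` by user 2, for any
value `s` and any `t` larger than all timestamps in `w`. -/
def Rrel (w x : WSeq) : Prop :=
  ∃ (t : ℚ) (s : String), (∀ a ∈ w.val, a.time < t) ∧
    x.val = w.val ++ [Act.wr 1 t s]

/-- `S` relates `x` to `x` appended with a read request `t:rd¹?` by user 1,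
finitely many user-2 actions, and a read response `t'':rd¹(s')` to user 1. -/
def Srel (x v : WSeq) : Prop :=
  ∃ (t t'' : ℚ) (s' : String) (mid : List Act),
    (∀ a ∈ mid, a.user = 1) ∧
    v.val = x.val ++ Act.rdReq 0 t :: (mid ++ [Act.rd 0 t'' s'])

/-! ### Auxiliary material -/

section Aux

/-- The values written in a list of actions. -/
def writeVals : List Act → List String
  | [] => []
  | Act.wr _ _ s :: rest => s :: writeVals rest
  | Act.rdReq _ _ :: rest => writeVals rest
  | Act.rd _ _ _ :: rest => writeVals rest

lemma lastWriteVal_mem (c : String) (τ : ℚ) (l : List Act) :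
    lastWriteVal c τ l = c ∨ lastWriteVal c τ l ∈ writeVals l := by
  induction l generalizing c with
  | nil => left; rfl
  | cons a rest ih =>
    cases a with
    | wr u t' s =>
      simp only [lastWriteVal, writeVals]
      by_cases h : t' ≤ τ
      · rw [if_pos h]
        rcases ih s with h' | h'
        · right; rw [h']; exact List.mem_cons_self
        · right; exact List.mem_cons_of_mem _ h'
      · rw [if_neg h]
        rcases ih c with h' | h'
        · left; exact h'
        · right; exact List.mem_cons_of_mem _ h'
    | rdReq u t' => simpa only [lastWriteVal, writeVals] using ih c
    | rd u t' s => simpa only [lastWriteVal, writeVals] using ih c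

lemma lastWriteVal_append (c : String) (τ : ℚ) (l l' : List Act) :
    lastWriteVal c τ (l ++ l') = lastWriteVal (lastWriteVal c τ l) τ l' := by
  induction l generalizing c with
  | nil => rfl
  | cons a rest ih =>
    cases a with
    | wr u t' s =>
      simp only [List.cons_append, lastWriteVal]
      by_cases h : t' ≤ τ
      · rw [if_pos h, if_pos h, ih]
      · rw [if_neg h, if_neg h, ih]
    | rdReq u t' => simpa only [List.cons_append, lastWriteVal, List.append_eq] using ih c
    | rd u t' s => simpa only [List.cons_append, lastWriteVal, List.append_eq] using ih c

lemma writeVals_append (l l' : List Act) :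
    writeVals (l ++ l') = writeVals l ++ writeVals l' := by
  induction l with
  | nil => rfl
  | cons a rest ih =>
    cases a <;> simp only [List.cons_append, writeVals, List.append_eq, ih, List.cons_append]

lemma user_eq_one_iff (a : Act) : (a.user = 1) ↔ ¬ (a.user = 0) := by
  have h := a.user.isLt
  simp only [Fin.ext_iff, Fin.val_one, Fin.val_zero]
  omega

instance : IsAntisymm Act (fun a b => a.time < b.time) :=
  ⟨fun _ _ h₁ h₂ => absurd h₂ (lt_asymm h₁)⟩

lemma proj_perm (l : List Act) : (projList 0 l ++ projList 1 l).Perm l := by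
  have h := List.filter_append_perm (fun a => decide (a.user = 0)) l
  have e : l.filter (fun a => !decide (a.user = 0)) = projList 1 l := by
    unfold projList
    apply List.filter_congr
    intro a _
    simp [user_eq_one_iff]
  rw [projList, ← e]
  exact h

lemma eq_of_proj_eq {l₁ l₂ : List Act}
    (h₁ : l₁.Pairwise (fun a b => a.time < b.time))
    (h₂ : l₂.Pairwise (fun a b => a.time < b.time))
    (e0 : projList 0 l₁ = projList 0 l₂) (e1 : projList 1 l₁ = projList 1 l₂) :
    l₁ = l₂ := by
  have p : l₁.Perm l₂ := by
    refine ((proj_perm l₁).symm.trans ?_).trans (proj_perm l₂)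
    rw [e0, e1]
  exact List.Perm.eq_of_pairwise (fun _ _ _ _ h h' => absurd h' (lt_asymm h)) h₁ h₂ p

/-- An upper bound for the timestamps in a list. -/
def maxTime (l : List Act) : ℚ := l.foldr (fun a r => max a.time r) 0

lemma le_maxTime {l : List Act} {a : Act} (h : a ∈ l) : a.time ≤ maxTime l := by
  induction l with
  | nil => cases h
  | cons b rest ih =>
    rcases List.mem_cons.mp h with h | h
    · subst h; exact le_max_left _ _
    · exact (ih h).trans (le_max_right _ _)

lemma maxTime_nonneg (l : List Act) : 0 ≤ maxTime l := by
  induction l with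
  | nil => exact le_refl 0
  | cons b rest ih => exact ih.trans (le_max_right _ _)

lemma projList_append (i : Fin 2) (l l' : List Act) :
    projList i (l ++ l') = projList i l ++ projList i l' :=
  List.filter_append ..

lemma projList_cons (i : Fin 2) (a : Act) (l : List Act) :
    projList i (a :: l) =
      if a.user = i then a :: projList i l else projList i l := by
  simp [projList, List.filter_cons]

lemma projList_nil (i : Fin 2) : projList i [] = [] := rfl

end Aux

/-- CAP instance: in the two-user replicated database model, the
relations `R` and `S` are `C`-entangled over `(σ₁, σ₂)`, where `C` is the set
of consistent sequences. -/
theorem cap_instance_entangled (s0 : String) :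
    Entangled (σp 0) (σp 1) {w : WSeq | Consistent s0 w.val} Rrel Srel := by
  intro w
  obtain ⟨s, hs⟩ := Infinite.exists_notMem_finset (s0 :: writeVals w.val).toFinset
  set t : ℚ := maxTime w.val + 1 with ht
  have hwt : ∀ a ∈ w.val, a.time < t := fun a ha =>
    lt_of_le_of_lt (le_maxTime ha) (lt_add_one _)
  have ht0 : (0:ℚ) ≤ t := le_trans (maxTime_nonneg _) (le_of_lt (lt_add_one _))
  -- x = w ++ [wr 1 t s]
  have hxwf : WF (w.val ++ [Act.wr 1 t s]) := by
    constructor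
    · rw [List.pairwise_append]
      refine ⟨w.prop.1, List.pairwise_singleton _ _, ?_⟩
      intro a ha b hb
      rw [List.mem_singleton] at hb
      subst hb
      exact hwt a ha
    · intro a ha
      rcases List.mem_append.mp ha with h | h
      · exact w.prop.2 a h
      · rw [List.mem_singleton] at h; subst h; exact ht0
  refine ⟨⟨w.val ++ [Act.wr 1 t s], hxwf⟩, ⟨t, s, hwt, rfl⟩, ?_, ?_⟩
  · -- dom(S) : append a read request and response
    have hvwf : WF ((w.val ++ [Act.wr 1 t s]) ++
        [Act.rdReq 0 (t+1), Act.rd 0 (t+2) s0]) := by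
      constructor
      · rw [List.pairwise_append]
        refine ⟨hxwf.1, ?_, ?_⟩
        · refine List.pairwise_cons.mpr ⟨?_, List.pairwise_singleton _ _⟩
          intro b hb
          rw [List.mem_singleton] at hb
          subst hb
          show t + 1 < t + 2
          linarith
        · intro a ha b hb
          have hat : a.time ≤ t := by
            rcases List.mem_append.mp ha with h | h
            · exact le_of_lt (hwt a h)
            · rw [List.mem_singleton] at h; subst h; exact le_refl t
          rcases List.mem_cons.mp hb with h | h
          · subst h; show a.time < t + 1; linarith
          · rw [List.mem_singleton] at h; subst h
            show a.time < t + 2; linarith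
      · intro a ha
        rcases List.mem_append.mp ha with h | h
        · exact hxwf.2 a h
        · rcases List.mem_cons.mp h with h' | h'
          · subst h'; show (0:ℚ) ≤ t + 1; linarith
          · rw [List.mem_singleton] at h'; subst h'
            show (0:ℚ) ≤ t + 2; linarith
    exact ⟨⟨_, hvwf⟩, t+1, t+2, s0, [], by simp, rfl⟩
  · rintro v ⟨t₁, t₃, s', mid, hmid, hv⟩ y z hy1 hz1 hy2 hz2
    -- basic ordering facts from well-formedness of v
    have hvpw := v.prop.1
    rw [hv] at hvpw
    rw [List.pairwise_append] at hvpw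
    obtain ⟨hpw1, hpw2, hcross⟩ := hvpw
    have htt1 : t < t₁ := by
      have := hcross (Act.wr 1 t s) (by simp) (Act.rdReq 0 t₁) (List.mem_cons_self)
      simpa [Act.time] using this
    have ht1t3 : t₁ < t₃ := by
      rw [List.pairwise_cons] at hpw2
      have := hpw2.1 (Act.rd 0 t₃ s') (by simp)
      simpa [Act.time] using this
    -- the canonical forms of y and z
    set Y : List Act := w.val ++ [Act.rdReq 0 t₁, Act.rd 0 t₃ s'] with hY
    set Z : List Act := w.val ++ [Act.wr 1 t s, Act.rdReq 0 t₁, Act.rd 0 t₃ s'] with hZ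
    have hwt1 : ∀ a ∈ w.val, a.time < t₁ := fun a ha => lt_trans (hwt a ha) htt1
    have hYpw : Y.Pairwise (fun a b => a.time < b.time) := by
      rw [hY, List.pairwise_append]
      refine ⟨w.prop.1, ?_, ?_⟩
      · refine List.pairwise_cons.mpr ⟨?_, List.pairwise_singleton _ _⟩
        intro b hb
        rw [List.mem_singleton] at hb; subst hb
        exact ht1t3
      · intro a ha b hb
        rcases List.mem_cons.mp hb with h | h
        · subst h; exact hwt1 a ha
        · rw [List.mem_singleton] at h; subst h
          exact lt_trans (hwt1 a ha) ht1t3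
    have hZpw : Z.Pairwise (fun a b => a.time < b.time) := by
      rw [hZ, List.pairwise_append]
      refine ⟨w.prop.1, ?_, ?_⟩
      · refine List.pairwise_cons.mpr ⟨?_, ?_⟩
        · intro b hb
          rcases List.mem_cons.mp hb with h | h
          · subst h; exact htt1
          · rw [List.mem_singleton] at h; subst h
            exact lt_trans htt1 ht1t3
        · refine List.pairwise_cons.mpr ⟨?_, List.pairwise_singleton _ _⟩
          intro b hb
          rw [List.mem_singleton] at hb; subst hb
          exact ht1t3
      · intro a ha b hb
        rcases List.mem_cons.mp hb with h | h
        · subst h; exact hwt a ha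
        · rcases List.mem_cons.mp h with h' | h'
          · subst h'; exact hwt1 a ha
          · rw [List.mem_singleton] at h'; subst h'
            exact lt_trans (hwt1 a ha) ht1t3
    -- projections
    have hmid0 : projList 0 mid = [] := by
      rw [projList, List.filter_eq_nil_iff]
      intro a ha
      simp [hmid a ha]
    have hproj0v : projList 0 v.val = projList 0 w.val ++ [Act.rdReq 0 t₁, Act.rd 0 t₃ s'] := by
      rw [hv]
      simp [projList_append, projList_cons, projList_nil, Act.user, hmid0]
    -- y.val = Y
    have hy1' : projList 0 y.val = projList 0 v.val := congrArg Subtype.val hy1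
    have hy2' : projList 1 y.val = projList 1 w.val := congrArg Subtype.val hy2
    have hz1' : projList 0 z.val = projList 0 v.val := congrArg Subtype.val hz1
    have hz2' : projList 1 z.val = projList 1 w.val ++ [Act.wr 1 t s] := by
      have h := congrArg Subtype.val hz2
      have : projList 1 (w.val ++ [Act.wr 1 t s]) = projList 1 w.val ++ [Act.wr 1 t s] := by
        simp [projList_append, projList_cons, projList_nil, Act.user]
      rw [← this]
      exact h
    have hYproj0 : projList 0 Y = projList 0 w.val ++ [Act.rdReq 0 t₁, Act.rd 0 t₃ s'] := by
      rw [hY]; simp [projList_append, projList_cons, projList_nil, Act.user]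
    have hYproj1 : projList 1 Y = projList 1 w.val := by
      rw [hY]; simp [projList_append, projList_cons, projList_nil, Act.user]
    have hZproj0 : projList 0 Z = projList 0 w.val ++ [Act.rdReq 0 t₁, Act.rd 0 t₃ s'] := by
      rw [hZ]; simp [projList_append, projList_cons, projList_nil, Act.user]
    have hZproj1 : projList 1 Z = projList 1 w.val ++ [Act.wr 1 t s] := by
      rw [hZ]; simp [projList_append, projList_cons, projList_nil, Act.user]
    have hyY : y.val = Y :=
      eq_of_proj_eq y.prop.1 hYpw
        (by rw [hy1', hproj0v, hYproj0]) (by rw [hy2', hYproj1])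
    have hzZ : z.val = Z :=
      eq_of_proj_eq z.prop.1 hZpw
        (by rw [hz1', hproj0v, hZproj0]) (by rw [hz2', hZproj1])
    -- now derive a contradiction from consistency of both y and z
    by_contra hcon
    push_neg at hcon
    obtain ⟨hyC, hzC⟩ := hcon
    have hyC : Consistent s0 y.val := hyC
    have hzC : Consistent s0 z.val := hzC
    rw [hyY] at hyC
    rw [hzZ] at hzC
    have n := w.val.length
    -- consistency of Y
    have hYlen : Y.length = w.val.length + 2 := by rw [hY]; simp
    have hYi : Y[w.val.length]'(by omega) = Act.rdReq 0 t₁ := by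
      rw [List.getElem_of_eq hY, List.getElem_append_right (le_refl _)]
      simp
    have hYj : Y[w.val.length+1]'(by omega) = Act.rd 0 t₃ s' := by
      rw [List.getElem_of_eq hY,
        List.getElem_append_right (by omega : w.val.length ≤ w.val.length + 1)]
      simp
    obtain ⟨τ, hτ1, hτ2, hτ3⟩ :=
      hyC w.val.length (w.val.length+1) (by omega) (by omega) (by omega) 0 t₁ t₃ s' hYi hYj
        (fun k hk h1 h2 _ _ => by omega) ht1t3
    -- consistency of Z
    have hZlen : Z.length = w.val.length + 3 := by rw [hZ]; simp
    have hZi : Z[w.val.length+1]'(by omega) = Act.rdReq 0 t₁ := by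
      rw [List.getElem_of_eq hZ,
        List.getElem_append_right (by omega : w.val.length ≤ w.val.length + 1)]
      simp
    have hZj : Z[w.val.length+2]'(by omega) = Act.rd 0 t₃ s' := by
      rw [List.getElem_of_eq hZ,
        List.getElem_append_right (by omega : w.val.length ≤ w.val.length + 2)]
      simp
    obtain ⟨τ', hτ'1, hτ'2, hτ'3⟩ :=
      hzC (w.val.length+1) (w.val.length+2) (by omega) (by omega) (by omega) 0 t₁ t₃ s' hZi hZj
        (fun k hk h1 h2 _ _ => by omega) ht1t3
    -- value read in z must be the fresh value s
    have hzval : lastWriteVal s0 τ' Z = s := by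
      rw [hZ, lastWriteVal_append]
      simp only [lastWriteVal]
      rw [if_pos (le_trans (le_of_lt htt1) hτ'1)]
    -- value read in y is an old value
    have hyval : lastWriteVal s0 τ Y = s0 ∨ lastWriteVal s0 τ Y ∈ writeVals w.val := by
      rw [hY, lastWriteVal_append]
      simp only [lastWriteVal]
      exact lastWriteVal_mem s0 τ w.val
    rw [← hτ3] at hyval
    rw [← hτ'3] at hzval
    subst hzval
    apply hs
    rw [List.mem_toFinset]
    rcases hyval with h | h
    · rw [h]; exact List.mem_cons_self
    · exact List.mem_cons_of_mem _ h
end
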